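/- Let T and T' be trees (connected acyclic simple graphs) each on n vertices, and suppose that Σ_{S ⊆ E(T)} (−1)^{|S|} p_{λ(S)} = Σ_{S ⊆ E(T')} (−1)^{|S|} p_{λ(S)} as elements of MvPowerSeries ℕ ℤ. Then for every positive integer k ≤ n, Σ_{S ∈ P_k(T)} (−1)^{|S|} p_{λ(S)} = Σ_{S ∈ P_k(T')} (−1)^{|S|} p_{λ(S)}, where P_k(T) is the set of edge subsets S ⊆ E(T) such that every connected component of the spanning subgraph (V(T), S) has at most k vertices. That is, equality of the chromatic symmetric functions (in their power-sum expansion) implies equality of the k-truncated chromatic symmetric functions. -/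

import Mathlib

/-- A proper coloring of a simple graph by natural-number colors:
adjacent vertices receive distinct colors. -/
def SimpleGraph.IsProperNatColoring {V : Type} (G : SimpleGraph V) (κ : V → ℕ) : Prop :=
  ∀ ⦃u w : V⦄, G.Adj u w → κ u ≠ κ w

/-- The chromatic symmetric function of `G`, as a formal power series in the
variables `(x_c)_{c : ℕ}` with integer coefficients: the coefficient on the
exponent vector `d : ℕ →₀ ℕ` is the number of proper colorings `κ` of `G`
with `|κ⁻¹(c)| = d c` for every color `c`. -/
noncomputable def csf {V : Type} (G : SimpleGraph V) : MvPowerSeries ℕ ℤ :=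
  fun d => ((Set.ncard {κ : V → ℕ |
    G.IsProperNatColoring κ ∧ ∀ c : ℕ, (κ ⁻¹' {c}).ncard = d c} : ℕ) : ℤ)

/-- `Zcsf G v c` is the part of the chromatic symmetric function of `G`
counting only the proper colorings `κ` with `κ v = c`. -/
noncomputable def Zcsf {V : Type} (G : SimpleGraph V) (v : V) (c : ℕ) : MvPowerSeries ℕ ℤ :=
  fun d => ((Set.ncard {κ : V → ℕ |
    G.IsProperNatColoring κ ∧ κ v = c ∧ ∀ c' : ℕ, (κ ⁻¹' {c'}).ncard = d c'} : ℕ) : ℤ)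

open Classical in
/-- The `i`-th power-sum symmetric function `p_i = Σ_c x_c^i`, as the power series
whose coefficient is `1` exactly on exponent vectors of the form `i·e_c`
(supported at a single color `c` with value `i`) and `0` elsewhere. -/
noncomputable def pSum (i : ℕ) : MvPowerSeries ℕ ℤ :=
  fun d => if ∃ c : ℕ, d = Finsupp.single c i then 1 else 0

/-- `p_{λ(H)}`: the product over the connected components `K` of a graph `H`
of the power-sum series `p_{|K|}`. -/
noncomputable def componentSizeProd {V : Type} [Fintype V] (H : SimpleGraph V) : MvPowerSeries ℕ ℤ :=
  letI := Fintype.ofFinite H.ConnectedComponent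
  ∏ K : H.ConnectedComponent, pSum (Set.ncard {u : V | H.connectedComponentMk u = K})

/-- The power-sum expansion `Σ_{S ⊆ E(T)} (−1)^{|S|} p_{λ(S)}` of the chromatic
symmetric function of `T` (Stanley's Theorem 2.5), where `λ(S)` records the sizes of
the connected components of the spanning subgraph `(V(T), S)`. -/
noncomputable def csfExpansion {V : Type} [Fintype V] [DecidableEq V]
    (T : SimpleGraph V) [DecidableRel T.Adj] : MvPowerSeries ℕ ℤ :=
  Finset.sum T.edgeFinset.powerset (fun S : Finset (Sym2 V) =>
    (-1 : MvPowerSeries ℕ ℤ) ^ S.card *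
      componentSizeProd (SimpleGraph.fromEdgeSet (↑S : Set (Sym2 V))))

open Classical in
/-- The `k`-truncated chromatic symmetric function
`ₖX_T = Σ_{S ∈ P_k(T)} (−1)^{|S|} p_{λ(S)}`, where `P_k(T)` is the set of edge
subsets `S ⊆ E(T)` such that every connected component of the spanning subgraph
`(V(T), S)` has at most `k` vertices. -/
noncomputable def truncCSF {V : Type} [Fintype V] [DecidableEq V]
    (k : ℕ) (T : SimpleGraph V) [DecidableRel T.Adj] : MvPowerSeries ℕ ℤ :=
  Finset.sum (T.edgeFinset.powerset.filter (fun S : Finset (Sym2 V) =>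
      ∀ u : V, Set.ncard {w : V |
        (SimpleGraph.fromEdgeSet (↑S : Set (Sym2 V))).Reachable w u} ≤ k))
    (fun S : Finset (Sym2 V) =>
      (-1 : MvPowerSeries ℕ ℤ) ^ S.card *
        componentSizeProd (SimpleGraph.fromEdgeSet (↑S : Set (Sym2 V))))

open Finset MvPowerSeries

noncomputable def pProd (m : Multiset ℕ) : MvPowerSeries ℕ ℤ := (m.map pSum).prod

open Classical in
lemma coeff_pSum (i : ℕ) (d : ℕ →₀ ℕ) :
    MvPowerSeries.coeff d (pSum i) = if ∃ c : ℕ, d = Finsupp.single c i then 1 else 0 := rfl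

lemma coeff_pSum_nonneg (i : ℕ) (d : ℕ →₀ ℕ) : 0 ≤ MvPowerSeries.coeff d (pSum i) := by
  classical
  rw [coeff_pSum]; split <;> norm_num

lemma pProd_zero : pProd 0 = 1 := by simp [pProd]

lemma pProd_cons (i : ℕ) (m : Multiset ℕ) : pProd (i ::ₘ m) = pSum i * pProd m := by
  simp [pProd]

lemma coeff_pProd_nonneg (m : Multiset ℕ) (d : ℕ →₀ ℕ) :
    0 ≤ MvPowerSeries.coeff d (pProd m) := by
  classical
  induction m using Multiset.induction_on generalizing d with
  | empty =>
    rw [pProd_zero, MvPowerSeries.coeff_one]; split <;> norm_num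
  | cons i m ih =>
    rw [pProd_cons, MvPowerSeries.coeff_mul]
    exact Finset.sum_nonneg fun p _ => mul_nonneg (coeff_pSum_nonneg _ _) (ih _)

/-- Key triangularity lemma. -/
lemma coeff_pProd_card (m : Multiset ℕ) (hm : ∀ x ∈ m, 0 < x) (d : ℕ →₀ ℕ)
    (h : MvPowerSeries.coeff d (pProd m) ≠ 0) :
    d.support.card ≤ Multiset.card m ∧
      (Multiset.card m ≤ d.support.card → m = d.support.val.map d) := by
  classical
  induction m using Multiset.induction_on generalizing d with
  | empty =>
    rw [pProd_zero, MvPowerSeries.coeff_one] at h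
    have hd : d = 0 := by by_contra hd; simp [hd] at h
    subst hd
    simp
  | cons i m ih =>
    rw [pProd_cons, MvPowerSeries.coeff_mul] at h
    obtain ⟨p, hp, hne⟩ := Finset.exists_ne_zero_of_sum_ne_zero h
    have h1 : MvPowerSeries.coeff p.1 (pSum i) ≠ 0 := left_ne_zero_of_mul hne
    have h2 : MvPowerSeries.coeff p.2 (pProd m) ≠ 0 := right_ne_zero_of_mul hne
    rw [coeff_pSum] at h1
    have hex : ∃ c : ℕ, p.1 = Finsupp.single c i := by
      by_contra hc; simp [hc] at h1
    obtain ⟨c, hc⟩ := hex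
    have hi : 0 < i := hm i (Multiset.mem_cons_self i m)
    have hd : Finsupp.single c i + p.2 = d := by
      rw [← hc]; exact Finset.HasAntidiagonal.mem_antidiagonal.mp hp
    have ihm := ih (fun x hx => hm x (Multiset.mem_cons_of_mem hx)) p.2 h2
    have hsub : d.support ⊆ insert c p.2.support := by
      rw [← hd]
      refine (Finsupp.support_add).trans ?_
      rw [Finsupp.support_single_ne_zero c hi.ne', Finset.insert_eq]
    have hcard1 : d.support.card ≤ p.2.support.card + 1 :=
      (Finset.card_le_card hsub).trans (Finset.card_insert_le _ _)
    constructor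
    · rw [Multiset.card_cons]
      omega
    · intro hge
      rw [Multiset.card_cons] at hge
      -- forces equalities
      have hcm : p.2.support.card = Multiset.card m := le_antisymm ihm.1 (by omega)
      have hcd : d.support.card = p.2.support.card + 1 := by omega
      have hnotmem : c ∉ p.2.support := by
        intro hmem
        have : insert c p.2.support = p.2.support := Finset.insert_eq_self.mpr hmem
        rw [this] at hsub
        have := Finset.card_le_card hsub
        omega
      have hset : d.support = insert c p.2.support := by
        apply Finset.eq_of_subset_of_card_le hsub
        rw [Finset.card_insert_of_notMem hnotmem, hcd]
      have hp2c : p.2 c = 0 := Finsupp.notMem_support_iff.mp hnotmem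
      have hdc : d c = i := by rw [← hd]; simp [hp2c]
      have hm2 : m = p.2.support.val.map p.2 := ihm.2 (by omega)
      rw [hset, Finset.insert_val_of_notMem hnotmem, Multiset.map_cons, hdc]
      congr 1
      rw [hm2]
      apply Multiset.map_congr rfl
      intro x hx
      have hxc : x ≠ c := by
        intro hxc; subst hxc; exact hnotmem hx
      rw [← hd]
      simp [Finsupp.single_apply, hxc, Ne.symm hxc]

/-- Encoding a list of (color, exponent) pairs as an exponent vector. -/
noncomputable def dOf : List (ℕ × ℕ) → (ℕ →₀ ℕ)
  | [] => 0
  | p :: L => Finsupp.single p.1 p.2 + dOf L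

lemma dOf_support (L : List (ℕ × ℕ)) (hnd : (L.map Prod.fst).Nodup)
    (hpos : ∀ p ∈ L, 0 < p.2) :
    (dOf L).support = (L.map Prod.fst).toFinset ∧
      (dOf L).support.val.map (dOf L) = ↑(L.map Prod.snd) := by
  classical
  induction L with
  | nil => simp [dOf]
  | cons p L ih =>
    rw [List.map_cons] at hnd
    obtain ⟨hnd1, hnd2⟩ := List.nodup_cons.mp hnd
    have ihp := ih hnd2 (fun q hq => hpos q (List.mem_cons_of_mem _ hq))
    have hppos : 0 < p.2 := hpos p (List.mem_cons_self)
    have hss : (Finsupp.single p.1 p.2).support = {p.1} :=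
      Finsupp.support_single_ne_zero _ hppos.ne'
    have hcnot : p.1 ∉ (dOf L).support := by
      rw [ihp.1]; simpa using hnd1
    have hdisj : Disjoint (Finsupp.single p.1 p.2).support (dOf L).support := by
      rw [hss]; simpa using hcnot
    have hsupp : (dOf (p :: L)).support = insert p.1 (dOf L).support := by
      show (Finsupp.single p.1 p.2 + dOf L).support = _
      rw [Finsupp.support_add_eq hdisj, hss, ← Finset.insert_eq]
    have hLc : dOf L p.1 = 0 := Finsupp.notMem_support_iff.mp hcnot
    have hnotmem : p.1 ∉ (dOf L).support := hcnot
    constructor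
    · rw [hsupp, ihp.1, List.map_cons, List.toFinset_cons]
    · rw [hsupp, Finset.insert_val_of_notMem hnotmem, Multiset.map_cons]
      have hval : dOf (p :: L) p.1 = p.2 := by
        show (Finsupp.single p.1 p.2 + dOf L) p.1 = p.2
        simp [hLc]
      rw [hval, List.map_cons, ← Multiset.cons_coe]
      congr 1
      rw [← ihp.2]
      apply Multiset.map_congr rfl
      intro x hx
      have hxc : x ≠ p.1 := by
        intro hxc; subst hxc; exact hcnot hx
      show (Finsupp.single p.1 p.2 + dOf L) x = dOf L x
      simp [Finsupp.single_apply, Ne.symm hxc]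

lemma one_le_coeff_dOf (L : List (ℕ × ℕ)) (hnd : (L.map Prod.fst).Nodup)
    (hpos : ∀ p ∈ L, 0 < p.2) :
    1 ≤ MvPowerSeries.coeff (dOf L) (pProd ↑(L.map Prod.snd)) := by
  classical
  induction L with
  | nil => simp [dOf, pProd]
  | cons p L ih =>
    rw [List.map_cons] at hnd
    obtain ⟨hnd1, hnd2⟩ := List.nodup_cons.mp hnd
    have ihp := ih hnd2 (fun q hq => hpos q (List.mem_cons_of_mem _ hq))
    rw [List.map_cons, ← Multiset.cons_coe, pProd_cons, MvPowerSeries.coeff_mul]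
    have hmem : ((Finsupp.single p.1 p.2, dOf L) : (ℕ →₀ ℕ) × (ℕ →₀ ℕ)) ∈
        Finset.HasAntidiagonal.antidiagonal (dOf (p :: L)) := by
      rw [Finset.HasAntidiagonal.mem_antidiagonal]; rfl
    have hterm : (1 : ℤ) ≤ MvPowerSeries.coeff (Finsupp.single p.1 p.2) (pSum p.2) *
        MvPowerSeries.coeff (dOf L) (pProd ↑(L.map Prod.snd)) := by
      have h1 : MvPowerSeries.coeff (Finsupp.single p.1 p.2) (pSum p.2) = 1 := by
        rw [coeff_pSum, if_pos ⟨p.1, rfl⟩]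
      rw [h1, one_mul]; exact ihp
    calc (1 : ℤ) ≤ _ := hterm
      _ ≤ _ := Finset.single_le_sum
          (f := fun q : (ℕ →₀ ℕ) × (ℕ →₀ ℕ) => MvPowerSeries.coeff q.1 (pSum p.2) *
            MvPowerSeries.coeff q.2 (pProd ↑(L.map Prod.snd)))
          (fun q _ => mul_nonneg (coeff_pSum_nonneg _ _) (coeff_pProd_nonneg _ _)) hmem

/-- Linear independence of the `pProd m` over finite families of multisets with
positive parts. -/
lemma pProd_indep (M : Finset (Multiset ℕ)) (hpos : ∀ m ∈ M, ∀ x ∈ m, 0 < x)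
    (a b : Multiset ℕ → ℤ)
    (h : (∑ m ∈ M, MvPowerSeries.C (a m) * pProd m) =
         ∑ m ∈ M, MvPowerSeries.C (b m) * pProd m) :
    ∀ m ∈ M, a m = b m := by
  classical
  by_contra hc
  push_neg at hc
  set D := M.filter (fun m => a m ≠ b m) with hD
  have hDne : D.Nonempty := by
    obtain ⟨m, hm, hne⟩ := hc
    exact ⟨m, Finset.mem_filter.mpr ⟨hm, hne⟩⟩
  obtain ⟨m₀, hm₀D, hmax⟩ := Finset.exists_max_image D Multiset.card hDne
  have hm₀M : m₀ ∈ M := (Finset.mem_filter.mp hm₀D).1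
  have hm₀ne : a m₀ ≠ b m₀ := (Finset.mem_filter.mp hm₀D).2
  -- encode m₀
  set L := (List.range m₀.toList.length).zip m₀.toList with hL
  have hnd : (L.map Prod.fst).Nodup := by
    rw [hL, List.map_fst_zip (by simp)]; exact List.nodup_range
  have hsnd : L.map Prod.snd = m₀.toList := by rw [hL, List.map_snd_zip (by simp)]
  have hposL : ∀ p ∈ L, 0 < p.2 := by
    intro p hp
    apply hpos m₀ hm₀M
    have : p.2 ∈ L.map Prod.snd := List.mem_map_of_mem hp
    rw [hsnd] at this
    rwa [← Multiset.mem_toList]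
  set d₀ := dOf L with hd₀
  obtain ⟨hsupp, hmap⟩ := dOf_support L hnd hposL
  have hsuppcard : d₀.support.card = Multiset.card m₀ := by
    rw [hsupp, List.toFinset_card_of_nodup hnd, List.length_map, hL,
      List.length_zip, List.length_range, min_self, Multiset.length_toList]
  have hmapm₀ : d₀.support.val.map d₀ = m₀ := by
    rw [hmap, hsnd, Multiset.coe_toList]
  -- apply coeff
  have hco := congrArg (MvPowerSeries.coeff d₀) h
  rw [map_sum, map_sum] at hco
  simp only [MvPowerSeries.coeff_C_mul] at hco
  have hzero : (∑ m ∈ M, (a m - b m) * MvPowerSeries.coeff d₀ (pProd m)) = 0 := by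
    simp only [sub_mul]
    rw [Finset.sum_sub_distrib, hco, sub_self]
  have hsingle : (∑ m ∈ M, (a m - b m) * MvPowerSeries.coeff d₀ (pProd m)) =
      (a m₀ - b m₀) * MvPowerSeries.coeff d₀ (pProd m₀) := by
    apply Finset.sum_eq_single_of_mem m₀ hm₀M
    intro m hmM hne
    by_cases hab : a m = b m
    · rw [hab, sub_self, zero_mul]
    by_cases hcoeff : MvPowerSeries.coeff d₀ (pProd m) = 0
    · rw [hcoeff, mul_zero]
    exfalso
    have hmD : m ∈ D := Finset.mem_filter.mpr ⟨hmM, hab⟩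
    have hle : Multiset.card m ≤ Multiset.card m₀ := hmax m hmD
    obtain ⟨hc1, hc2⟩ := coeff_pProd_card m (hpos m hmM) d₀ hcoeff
    rw [hsuppcard] at hc1 hc2
    have : m = d₀.support.val.map d₀ := hc2 (by omega)
    rw [hmapm₀] at this
    exact hne this
  rw [hsingle] at hzero
  have hge : 1 ≤ MvPowerSeries.coeff d₀ (pProd m₀) := by
    have := one_le_coeff_dOf L hnd hposL
    rwa [hsnd, Multiset.coe_toList] at this
  have := mul_eq_zero.mp hzero
  rcases this with h' | h'
  · exact hm₀ne (sub_eq_zero.mp h')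
  · omega

/-! ### Graph side -/

noncomputable def compSizes {V : Type} [Fintype V] (H : SimpleGraph V) : Multiset ℕ :=
  letI := Fintype.ofFinite H.ConnectedComponent
  (Finset.univ : Finset H.ConnectedComponent).val.map
    (fun K => Set.ncard {u : V | H.connectedComponentMk u = K})

lemma componentSizeProd_eq {V : Type} [Fintype V] (H : SimpleGraph V) :
    componentSizeProd H = pProd (compSizes H) := by
  unfold componentSizeProd compSizes pProd
  rw [Multiset.map_map]
  exact Finset.prod_eq_multiset_prod _ _

lemma compSizes_pos {V : Type} [Fintype V] (H : SimpleGraph V) :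
    ∀ x ∈ compSizes H, 0 < x := by
  intro x hx
  obtain ⟨K, _, rfl⟩ := Multiset.mem_map.mp hx
  obtain ⟨u, hu⟩ := K.exists_rep
  have hne : {u : V | H.connectedComponentMk u = K}.Nonempty := ⟨u, hu⟩
  rw [Set.ncard_pos (Set.toFinite _)]
  exact hne

lemma compSizes_le_iff {V : Type} [Fintype V] (H : SimpleGraph V) (k : ℕ) :
    (∀ u : V, Set.ncard {w : V | H.Reachable w u} ≤ k) ↔ ∀ x ∈ compSizes H, x ≤ k := by
  have hset : ∀ u : V, {w : V | H.Reachable w u} =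
      {w : V | H.connectedComponentMk w = H.connectedComponentMk u} := by
    intro u; ext w; simp [SimpleGraph.ConnectedComponent.eq]
  constructor
  · intro h x hx
    obtain ⟨K, _, rfl⟩ := Multiset.mem_map.mp hx
    obtain ⟨u, hu0⟩ := K.exists_rep
    have hu : H.connectedComponentMk u = K := hu0
    calc Set.ncard {v : V | H.connectedComponentMk v = K}
        = Set.ncard {w : V | H.Reachable w u} := by rw [hset u, hu]
      _ ≤ k := h u
  · intro h u
    rw [hset u]
    apply h
    unfold compSizes
    letI := Fintype.ofFinite H.ConnectedComponent
    exact Multiset.mem_map.mpr ⟨H.connectedComponentMk u, Finset.mem_univ _, rfl⟩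

open Classical in
noncomputable def gcoef {V : Type} [Fintype V] [DecidableEq V]
    (T : SimpleGraph V) [DecidableRel T.Adj] (m : Multiset ℕ) : ℤ :=
  ∑ S ∈ T.edgeFinset.powerset.filter
      (fun S : Finset (Sym2 V) => compSizes (SimpleGraph.fromEdgeSet (↑S : Set (Sym2 V))) = m),
    (-1 : ℤ) ^ S.card

lemma neg_one_pow_eq_C (c : ℕ) :
    ((-1 : MvPowerSeries ℕ ℤ)) ^ c = MvPowerSeries.C ((-1 : ℤ) ^ c) := by
  rw [map_pow, map_neg, map_one]

lemma csfExpansion_eq {V : Type} [Fintype V] [DecidableEq V]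
    (T : SimpleGraph V) [DecidableRel T.Adj] (M : Finset (Multiset ℕ))
    (hM : ∀ S ∈ T.edgeFinset.powerset,
      compSizes (SimpleGraph.fromEdgeSet (↑S : Set (Sym2 V))) ∈ M) :
    csfExpansion T = ∑ m ∈ M, MvPowerSeries.C (gcoef T m) * pProd m := by
  classical
  unfold csfExpansion
  rw [← Finset.sum_fiberwise_of_maps_to hM]
  apply Finset.sum_congr rfl
  intro m _
  unfold gcoef
  rw [map_sum, Finset.sum_mul]
  apply Finset.sum_congr rfl
  intro S hS
  have hm : compSizes (SimpleGraph.fromEdgeSet (↑S : Set (Sym2 V))) = m :=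
    (Finset.mem_filter.mp hS).2
  rw [componentSizeProd_eq, hm, neg_one_pow_eq_C]

lemma truncCSF_eq {V : Type} [Fintype V] [DecidableEq V]
    (T : SimpleGraph V) [DecidableRel T.Adj] (k : ℕ) (M : Finset (Multiset ℕ))
    (hM : ∀ S ∈ T.edgeFinset.powerset,
      compSizes (SimpleGraph.fromEdgeSet (↑S : Set (Sym2 V))) ∈ M) :
    truncCSF k T = ∑ m ∈ M,
      if (∀ x ∈ m, x ≤ k) then MvPowerSeries.C (gcoef T m) * pProd m else 0 := by
  classical
  unfold truncCSF
  have hMfilt : ∀ S ∈ (T.edgeFinset.powerset.filter (fun S : Finset (Sym2 V) =>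
      ∀ u : V, Set.ncard {w : V |
        (SimpleGraph.fromEdgeSet (↑S : Set (Sym2 V))).Reachable w u} ≤ k)),
      compSizes (SimpleGraph.fromEdgeSet (↑S : Set (Sym2 V))) ∈ M :=
    fun S hS => hM S (Finset.mem_filter.mp hS).1
  rw [← Finset.sum_fiberwise_of_maps_to hMfilt]
  apply Finset.sum_congr rfl
  intro m _
  rw [Finset.filter_filter]
  by_cases hmk : ∀ x ∈ m, x ≤ k
  · rw [if_pos hmk]
    have hpred : ∀ S ∈ T.edgeFinset.powerset,
        (((∀ u : V, Set.ncard {w : V |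
            (SimpleGraph.fromEdgeSet (↑S : Set (Sym2 V))).Reachable w u} ≤ k) ∧
          compSizes (SimpleGraph.fromEdgeSet (↑S : Set (Sym2 V))) = m) ↔
          compSizes (SimpleGraph.fromEdgeSet (↑S : Set (Sym2 V))) = m) := by
      intro S _
      constructor
      · exact fun h => h.2
      · intro h
        refine ⟨?_, h⟩
        rw [compSizes_le_iff, h]
        exact hmk
    rw [Finset.filter_congr hpred]
    unfold gcoef
    rw [map_sum, Finset.sum_mul]
    apply Finset.sum_congr rfl
    intro S hS
    have hm : compSizes (SimpleGraph.fromEdgeSet (↑S : Set (Sym2 V))) = m :=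
      (Finset.mem_filter.mp hS).2
    rw [componentSizeProd_eq, hm, neg_one_pow_eq_C]
  · rw [if_neg hmk]
    rw [Finset.filter_false_of_mem, Finset.sum_empty]
    intro S _
    rintro ⟨hq, hm⟩
    apply hmk
    rw [← hm]
    rw [← compSizes_le_iff]
    exact hq
/-- If two trees `T, T'` on `n` vertices have equal chromatic symmetric
functions (in the power-sum expansion `Σ_{S ⊆ E} (−1)^{|S|} p_{λ(S)}`), then for every
`1 ≤ k ≤ n` their `k`-truncated chromatic symmetric functions are also equal. -/
theorem truncated_csf_eq_of_csf_eq {V V' : Type}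
    [Fintype V] [DecidableEq V] [Fintype V'] [DecidableEq V']
    (T : SimpleGraph V) [DecidableRel T.Adj] (T' : SimpleGraph V') [DecidableRel T'.Adj]
    (hT : T.IsTree) (hT' : T'.IsTree) (n : ℕ)
    (hV : Fintype.card V = n) (hV' : Fintype.card V' = n)
    (h : csfExpansion T = csfExpansion T') :
    ∀ k : ℕ, 1 ≤ k → k ≤ n → truncCSF k T = truncCSF k T' := by

  classical
  intro k _ _
  set M := (T.edgeFinset.powerset.image
      (fun S : Finset (Sym2 V) => compSizes (SimpleGraph.fromEdgeSet (↑S : Set (Sym2 V))))) ∪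
    (T'.edgeFinset.powerset.image
      (fun S : Finset (Sym2 V') => compSizes (SimpleGraph.fromEdgeSet (↑S : Set (Sym2 V')))))
    with hMdef
  have hMT : ∀ S ∈ T.edgeFinset.powerset,
      compSizes (SimpleGraph.fromEdgeSet (↑S : Set (Sym2 V))) ∈ M :=
    fun S hS => Finset.mem_union_left _ (Finset.mem_image_of_mem _ hS)
  have hMT' : ∀ S ∈ T'.edgeFinset.powerset,
      compSizes (SimpleGraph.fromEdgeSet (↑S : Set (Sym2 V'))) ∈ M :=
    fun S hS => Finset.mem_union_right _ (Finset.mem_image_of_mem _ hS)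
  have hpos : ∀ m ∈ M, ∀ x ∈ m, 0 < x := by
    intro m hm
    rcases Finset.mem_union.mp hm with hm | hm
    · obtain ⟨S, _, rfl⟩ := Finset.mem_image.mp hm
      exact compSizes_pos _
    · obtain ⟨S, _, rfl⟩ := Finset.mem_image.mp hm
      exact compSizes_pos _
  have heq : ∀ m ∈ M, gcoef T m = gcoef T' m := by
    apply pProd_indep M hpos
    rw [← csfExpansion_eq T M hMT, ← csfExpansion_eq T' M hMT']
    exact h
  rw [truncCSF_eq T k M hMT, truncCSF_eq T' k M hMT']
  apply Finset.sum_congr rfl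
  intro m hm
  by_cases hmk : ∀ x ∈ m, x ≤ k
  · rw [if_pos hmk, if_pos hmk, heq m hm]
  · rw [if_neg hmk, if_neg hmk]
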